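/- Let S be a numerical semigroup of multiplicity 4. Then S is 4-irreducible if and only if S = ⟨4,5,6,7⟩ or S = ⟨4,6,7,9⟩ or S is an irreducible numerical semigroup. -/

import Mathlib

/-- Membership of an integer in an additive submonoid of `ℕ`, viewed inside `ℤ`
via the inclusion `ℕ ⊆ ℤ`. -/
def AddSubmonoid.zmem (S : AddSubmonoid ℕ) (x : ℤ) : Prop :=
  ∃ n : ℕ, n ∈ S ∧ (n : ℤ) = x

/-- The Frobenius number `g(S) = max {x ∈ ℤ : x ∉ S}` of a numerical semigroup. -/
noncomputable def frobeniusNumber (S : AddSubmonoid ℕ) : ℤ :=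
  sSup {x : ℤ | ¬ S.zmem x}

/-- The set of pseudo-Frobenius numbers
`T(S) = {x ∈ ℤ \ S : x + s ∈ S for all s ∈ S, s ≠ 0}`. -/
def pseudoFrobeniusSet (S : AddSubmonoid ℕ) : Set ℤ :=
  {x : ℤ | ¬ S.zmem x ∧ ∀ s ∈ S, s ≠ 0 → S.zmem (x + s)}

/-- A numerical semigroup: an additive submonoid of `ℕ` with finite complement. -/
def IsNumericalSemigroup (S : AddSubmonoid ℕ) : Prop := ((S : Set ℕ)ᶜ).Finite

/-- The multiplicity of a numerical semigroup: its least positive element. -/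
noncomputable def multiplicityNS (S : AddSubmonoid ℕ) : ℕ := sInf {x : ℕ | x ∈ S ∧ x ≠ 0}

/-- A numerical semigroup is irreducible if it is not the intersection of two
numerical semigroups properly containing it. -/
def IsIrreducibleNS (S : AddSubmonoid ℕ) : Prop :=
  ¬ ∃ T₁ T₂ : AddSubmonoid ℕ, IsNumericalSemigroup T₁ ∧ IsNumericalSemigroup T₂ ∧
    S = T₁ ⊓ T₂ ∧ S < T₁ ∧ S < T₂

/-- A numerical semigroup of multiplicity `m` is `m`-irreducible if it is not the
intersection of two numerical semigroups of multiplicity `m` properly containing it. -/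
def IsMIrreducibleNS (m : ℕ) (S : AddSubmonoid ℕ) : Prop :=
  ¬ ∃ T₁ T₂ : AddSubmonoid ℕ, IsNumericalSemigroup T₁ ∧ IsNumericalSemigroup T₂ ∧
    multiplicityNS T₁ = m ∧ multiplicityNS T₂ = m ∧
    S = T₁ ⊓ T₂ ∧ S < T₁ ∧ S < T₂

namespace Stmt19Aux

def adjoin (S : AddSubmonoid ℕ) (h : ℕ) (hh : h + h ∈ S)
    (hadd : ∀ s ∈ S, s ≠ 0 → h + s ∈ S) : AddSubmonoid ℕ where
  carrier := insert h ↑S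
  zero_mem' := Or.inr S.zero_mem
  add_mem' := by
    rintro a b (rfl | ha) (rfl | hb)
    · exact Or.inr hh
    · rcases eq_or_ne b 0 with rfl | hb0
      · exact Or.inl rfl
      · exact Or.inr (hadd b hb hb0)
    · rcases eq_or_ne a 0 with rfl | ha0
      · exact Or.inl (zero_add _)
      · exact Or.inr (by rw [add_comm]; exact hadd a ha ha0)
    · exact Or.inr (S.add_mem ha hb)

lemma mem_adjoin {S : AddSubmonoid ℕ} {h : ℕ} {hh hadd} {x : ℕ} :
    x ∈ adjoin S h hh hadd ↔ x = h ∨ x ∈ S := Set.mem_insert_iff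

lemma ns_adjoin {S : AddSubmonoid ℕ} {h : ℕ} {hh hadd} (hns : IsNumericalSemigroup S) :
    IsNumericalSemigroup (adjoin S h hh hadd) := by
  have hfin : ((S : Set ℕ)ᶜ).Finite := hns
  refine hfin.subset ?_
  intro x hx hxS
  exact hx (Set.mem_insert_iff.mpr (Or.inr hxS))

lemma lt_adjoin {S : AddSubmonoid ℕ} {h : ℕ} {hh hadd} (hhS : h ∉ S) :
    S < adjoin S h hh hadd := by
  rw [SetLike.lt_iff_le_and_exists]
  exact ⟨fun x hx => mem_adjoin.mpr (Or.inr hx), h, mem_adjoin.mpr (Or.inl rfl), hhS⟩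

lemma mult_eq_four (S : AddSubmonoid ℕ) (h4 : 4 ∈ S) (hge : ∀ x ∈ S, x ≠ 0 → 4 ≤ x) :
    multiplicityNS S = 4 := by
  refine le_antisymm (Nat.sInf_le (show (4:ℕ) ∈ {x : ℕ | x ∈ S ∧ x ≠ 0} from ⟨h4, by norm_num⟩)) ?_
  have hm := Nat.sInf_mem (⟨4, h4, by norm_num⟩ : {x : ℕ | x ∈ S ∧ x ≠ 0}.Nonempty)
  exact hge _ hm.1 hm.2

lemma four_mem (S : AddSubmonoid ℕ) (hns : IsNumericalSemigroup S)
    (hmult : multiplicityNS S = 4) : 4 ∈ S := by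
  have hfin : ((S : Set ℕ)ᶜ).Finite := hns
  have hinf : (S : Set ℕ).Infinite := by
    have := hfin.infinite_compl
    rwa [compl_compl] at this
  obtain ⟨b, hb, hb0⟩ := hinf.exists_gt 0
  have hm := Nat.sInf_mem (⟨b, hb, by omega⟩ : {x : ℕ | x ∈ S ∧ x ≠ 0}.Nonempty)
  rw [show sInf {x : ℕ | x ∈ S ∧ x ≠ 0} = multiplicityNS S from rfl, hmult] at hm
  exact hm.1

lemma four_le (S : AddSubmonoid ℕ) (hmult : multiplicityNS S = 4) :
    ∀ x ∈ S, x ≠ 0 → 4 ≤ x := by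
  intro x hx hx0
  have := Nat.sInf_le (show x ∈ {x : ℕ | x ∈ S ∧ x ≠ 0} from ⟨hx, hx0⟩)
  rw [show sInf {x : ℕ | x ∈ S ∧ x ≠ 0} = multiplicityNS S from rfl, hmult] at this
  exact this

lemma all_ge (S : AddSubmonoid ℕ) (h4 : 4 ∈ S) {a : ℕ}
    (h0 : a ∈ S) (h1 : a + 1 ∈ S) (h2 : a + 2 ∈ S) (h3 : a + 3 ∈ S) :
    ∀ n, a ≤ n → n ∈ S := by
  intro n
  induction n using Nat.strong_induction_on with
  | _ n ih =>
    intro hn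
    rcases lt_or_ge n (a + 4) with hlt | hge
    · have : n = a ∨ n = a + 1 ∨ n = a + 2 ∨ n = a + 3 := by omega
      rcases this with rfl | rfl | rfl | rfl <;> assumption
    · have hm : n - 4 ∈ S := ih (n - 4) (by omega) (by omega)
      have := S.add_mem hm h4
      rwa [show n - 4 + 4 = n by omega] at this

lemma mem_closure1 (x : ℕ) :
    x ∈ AddSubmonoid.closure ({4, 5, 6, 7} : Set ℕ) ↔ x = 0 ∨ 4 ≤ x := by
  constructor
  · intro hx
    induction hx using AddSubmonoid.closure_induction with
    | mem y hy => simp only [Set.mem_insert_iff, Set.mem_singleton_iff] at hy; omega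
    | zero => left; rfl
    | add a b _ _ ha hb => omega
  · rintro (rfl | hx)
    · exact AddSubmonoid.zero_mem _
    · have h4 : (4 : ℕ) ∈ AddSubmonoid.closure ({4, 5, 6, 7} : Set ℕ) :=
        AddSubmonoid.subset_closure (by simp)
      exact all_ge _ h4 h4 (AddSubmonoid.subset_closure (by simp))
        (AddSubmonoid.subset_closure (by simp)) (AddSubmonoid.subset_closure (by simp)) x hx

lemma mem_closure2 (x : ℕ) :
    x ∈ AddSubmonoid.closure ({4, 6, 7, 9} : Set ℕ) ↔ x = 0 ∨ x = 4 ∨ 6 ≤ x := by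
  constructor
  · intro hx
    induction hx using AddSubmonoid.closure_induction with
    | mem y hy => simp only [Set.mem_insert_iff, Set.mem_singleton_iff] at hy; omega
    | zero => left; rfl
    | add a b _ _ ha hb => omega
  · rintro (rfl | rfl | hx)
    · exact AddSubmonoid.zero_mem _
    · exact AddSubmonoid.subset_closure (by simp)
    · have h4 : (4 : ℕ) ∈ AddSubmonoid.closure ({4, 6, 7, 9} : Set ℕ) :=
        AddSubmonoid.subset_closure (by simp)
      have h6 : (6 : ℕ) ∈ AddSubmonoid.closure ({4, 6, 7, 9} : Set ℕ) :=
        AddSubmonoid.subset_closure (by simp)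
      have h7 : (7 : ℕ) ∈ AddSubmonoid.closure ({4, 6, 7, 9} : Set ℕ) :=
        AddSubmonoid.subset_closure (by simp)
      have h8 : (8 : ℕ) ∈ AddSubmonoid.closure ({4, 6, 7, 9} : Set ℕ) := by
        simpa using AddSubmonoid.add_mem _ h4 h4
      have h9 : (9 : ℕ) ∈ AddSubmonoid.closure ({4, 6, 7, 9} : Set ℕ) :=
        AddSubmonoid.subset_closure (by simp)
      exact all_ge _ h4 h6 h7 h8 h9 x hx


/-- Main construction: a non-irreducible numerical semigroup of multiplicity 4,
other than the two exceptional ones, admits a multiplicity-4 decomposition. -/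
lemma key (S : AddSubmonoid ℕ) (hns : IsNumericalSemigroup S)
    (hmult : multiplicityNS S = 4)
    (hS1 : S ≠ AddSubmonoid.closure {4, 5, 6, 7})
    (hS2 : S ≠ AddSubmonoid.closure {4, 6, 7, 9})
    (T : AddSubmonoid ℕ) (hT : S < T) (F : ℕ) (hFS : F ∉ S)
    (hFmax : ∀ x, x ∉ S → x ≤ F) (hFT : F ∉ T) :
    ∃ T₁ T₂ : AddSubmonoid ℕ, IsNumericalSemigroup T₁ ∧ IsNumericalSemigroup T₂ ∧
      multiplicityNS T₁ = 4 ∧ multiplicityNS T₂ = 4 ∧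
      S = T₁ ⊓ T₂ ∧ S < T₁ ∧ S < T₂ := by
  have h4S : 4 ∈ S := four_mem S hns hmult
  have hle4 := four_le S hmult
  have hST : S ≤ T := le_of_lt hT
  -- the largest element of T \ S
  have hfinTS : ((T : Set ℕ) \ (S : Set ℕ)).Finite := by
    have hfin : ((S : Set ℕ)ᶜ).Finite := hns
    exact hfin.subset (fun x hx => hx.2)
  obtain ⟨w, hwT, hwS⟩ := (SetLike.lt_iff_le_and_exists.mp hT).2
  have hne : hfinTS.toFinset.Nonempty := ⟨w, by simp [Set.Finite.mem_toFinset]; exact ⟨hwT, hwS⟩⟩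
  obtain ⟨h, ⟨hhT, hhS⟩, hhmax⟩ :
      ∃ h : ℕ, (h ∈ T ∧ h ∉ S) ∧ ∀ x ∈ T, x ∉ S → x ≤ h := by
    refine ⟨hfinTS.toFinset.max' hne, ?_, ?_⟩
    · have := hfinTS.toFinset.max'_mem hne
      simpa [Set.Finite.mem_toFinset] using this
    · intro x hx hxS
      exact hfinTS.toFinset.le_max' x (by simp [Set.Finite.mem_toFinset]; exact ⟨hx, hxS⟩)
  have hh0 : h ≠ 0 := fun e => hhS (e ▸ S.zero_mem)
  have hhh : h + h ∈ S := by
    by_contra hc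
    have := hhmax _ (T.add_mem hhT hhT) hc
    omega
  have hadd : ∀ s ∈ S, s ≠ 0 → h + s ∈ S := by
    intro s hs hs0
    by_contra hc
    have := hhmax _ (T.add_mem hhT (hST hs)) hc
    omega
  have hhF : h ≠ F := fun e => hFT (e ▸ hhT)
  have hhleF : h ≤ F := hFmax h hhS
  have hh2 : 2 ≤ h := by
    have := hle4 _ hhh (by omega)
    omega
  have hh4 : h ≠ 4 := fun e => hhS (e ▸ h4S)
  have hcase : h = 2 ∨ h = 3 ∨ 5 ≤ h := by omega
  rcases hcase with rfl | rfl | hh5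
  · -- h = 2 : S contains all even numbers ≥ 4; exceptional structure
    have heven : ∀ k : ℕ, 4 + 2 * k ∈ S := by
      intro k
      induction k with
      | zero => simpa using h4S
      | succ n ihn =>
        have := hadd _ ihn (by omega)
        rwa [show 4 + 2 * (n + 1) = 2 + (4 + 2 * n) by omega]
    have even_mem : ∀ x : ℕ, 2 ∣ x → 4 ≤ x → x ∈ S := by
      intro x hdvd hx
      obtain ⟨k, rfl⟩ : ∃ k, x = 4 + 2 * k := ⟨(x - 4) / 2, by omega⟩
      exact heven k
    have hFodd : 2 * F + 1 ∈ S := by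
      by_contra hc
      have := hFmax _ hc
      omega
    set O : Set ℕ := {x : ℕ | x ∈ S ∧ ¬ 2 ∣ x} with hO
    have hOne : O.Nonempty := ⟨2 * F + 1, hFodd, by omega⟩
    set c : ℕ := sInf O with hcdef
    have hc := Nat.sInf_mem hOne
    obtain ⟨hcS, hcodd⟩ := hc
    have hc5 : 5 ≤ c := by
      have := hle4 c hcS (by omega)
      omega
    have hup : ∀ k : ℕ, c + 2 * k ∈ S := by
      intro k
      induction k with
      | zero => simpa using hcS
      | succ n ihn =>
        have := hadd _ ihn (by omega)
        rwa [show c + 2 * (n + 1) = 2 + (c + 2 * n) by omega]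
    have odd_mem : ∀ x : ℕ, ¬ 2 ∣ x → c ≤ x → x ∈ S := by
      intro x hodd hx
      obtain ⟨k, rfl⟩ : ∃ k, x = c + 2 * k := ⟨(x - c) / 2, by omega⟩
      exact hup k
    have odd_ge : ∀ x ∈ S, ¬ 2 ∣ x → c ≤ x := by
      intro x hx hodd
      exact Nat.sInf_le (show x ∈ O from ⟨hx, hodd⟩)
    have hc5' : c ≠ 5 := by
      intro hc5e
      apply hS1
      ext x
      rw [mem_closure1]
      constructor
      · intro hx
        rcases eq_or_ne x 0 with rfl | hx0
        · exact Or.inl rfl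
        · exact Or.inr (hle4 x hx hx0)
      · rintro (rfl | hx)
        · exact S.zero_mem
        · by_cases hp : 2 ∣ x
          · exact even_mem x hp hx
          · exact odd_mem x hp (by omega)
    have hc7 : c ≠ 7 := by
      intro hc7e
      apply hS2
      ext x
      rw [mem_closure2]
      constructor
      · intro hx
        rcases eq_or_ne x 0 with rfl | hx0
        · exact Or.inl rfl
        · have h4x := hle4 x hx hx0
          rcases eq_or_ne x 5 with rfl | hx5
          · exact absurd (odd_ge 5 hx (by omega)) (by omega)
          · right; omega
      · rintro (rfl | rfl | hx)
        · exact S.zero_mem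
        · exact h4S
        · by_cases hp : 2 ∣ x
          · exact even_mem x hp (by omega)
          · exact odd_mem x hp (by omega)
    have hc9 : 9 ≤ c := by omega
    have hc4S : c - 4 ∉ S := fun hx => by have := odd_ge _ hx (by omega); omega
    have hc2S : c - 2 ∉ S := fun hx => by have := odd_ge _ hx (by omega); omega
    have hU2 : (c - 4) + (c - 4) ∈ S := even_mem _ (by omega) (by omega)
    have hUadd : ∀ s ∈ S, s ≠ 0 → (c - 4) + s ∈ S := by
      intro s hs hs0
      by_cases hp : 2 ∣ s
      · have := hle4 s hs hs0
        exact odd_mem _ (by omega) (by omega)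
      · have := odd_ge s hs hp
        exact even_mem _ (by omega) (by omega)
    have hV2 : (c - 2) + (c - 2) ∈ S := even_mem _ (by omega) (by omega)
    have hVadd : ∀ s ∈ S, s ≠ 0 → (c - 2) + s ∈ S := by
      intro s hs hs0
      by_cases hp : 2 ∣ s
      · have := hle4 s hs hs0
        exact odd_mem _ (by omega) (by omega)
      · have := odd_ge s hs hp
        exact even_mem _ (by omega) (by omega)
    refine ⟨adjoin S (c - 4) hU2 hUadd, adjoin S (c - 2) hV2 hVadd,
      ns_adjoin hns, ns_adjoin hns, ?_, ?_, ?_, lt_adjoin hc4S, lt_adjoin hc2S⟩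
    · refine mult_eq_four _ (mem_adjoin.mpr (Or.inr h4S)) ?_
      intro x hx hx0
      rcases mem_adjoin.mp hx with rfl | hx'
      · omega
      · exact hle4 x hx' hx0
    · refine mult_eq_four _ (mem_adjoin.mpr (Or.inr h4S)) ?_
      intro x hx hx0
      rcases mem_adjoin.mp hx with rfl | hx'
      · omega
      · exact hle4 x hx' hx0
    · ext x
      simp only [AddSubmonoid.mem_inf, mem_adjoin]
      constructor
      · intro hx
        exact ⟨Or.inr hx, Or.inr hx⟩
      · rintro ⟨rfl | h1, h2 | h2⟩
        · omega
        · exact h2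
        · exact h1
        · exact h1
  · -- h = 3 : S must be one of the exceptional semigroups, contradiction
    exfalso
    have h6 : 6 ∈ S := by simpa using hhh
    have h7 : 7 ∈ S := by simpa using hadd 4 h4S (by norm_num)
    have h8 : 8 ∈ S := by simpa using S.add_mem h4S h4S
    have h9 : 9 ∈ S := by simpa using hadd 6 h6 (by norm_num)
    have hall : ∀ n, 6 ≤ n → n ∈ S := all_ge S h4S h6 h7 h8 h9
    by_cases h5 : 5 ∈ S
    · apply hS1
      ext x
      rw [mem_closure1]
      constructor
      · intro hx
        rcases eq_or_ne x 0 with rfl | hx0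
        · exact Or.inl rfl
        · exact Or.inr (hle4 x hx hx0)
      · rintro (rfl | hx)
        · exact S.zero_mem
        · rcases (show x = 4 ∨ x = 5 ∨ 6 ≤ x by omega) with rfl | rfl | hx6
          · exact h4S
          · exact h5
          · exact hall x hx6
    · apply hS2
      ext x
      rw [mem_closure2]
      constructor
      · intro hx
        rcases eq_or_ne x 0 with rfl | hx0
        · exact Or.inl rfl
        · have := hle4 x hx hx0
          rcases eq_or_ne x 5 with rfl | hx5
          · exact absurd hx h5
          · right; omega
      · rintro (rfl | rfl | hx)
        · exact S.zero_mem
        · exact h4S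
        · exact hall x hx
  · -- h ≥ 5 : use S ∪ {h} and S ∪ {F}
    have hF6 : 6 ≤ F := by omega
    have hFF : F + F ∈ S := by
      by_contra hc
      have := hFmax _ hc
      omega
    have hFadd : ∀ s ∈ S, s ≠ 0 → F + s ∈ S := by
      intro s hs hs0
      by_contra hc
      have := hFmax _ hc
      omega
    refine ⟨adjoin S h hhh hadd, adjoin S F hFF hFadd,
      ns_adjoin hns, ns_adjoin hns, ?_, ?_, ?_, lt_adjoin hhS, lt_adjoin hFS⟩
    · refine mult_eq_four _ (mem_adjoin.mpr (Or.inr h4S)) ?_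
      intro x hx hx0
      rcases mem_adjoin.mp hx with rfl | hx'
      · omega
      · exact hle4 x hx' hx0
    · refine mult_eq_four _ (mem_adjoin.mpr (Or.inr h4S)) ?_
      intro x hx hx0
      rcases mem_adjoin.mp hx with rfl | hx'
      · omega
      · exact hle4 x hx' hx0
    · ext x
      simp only [AddSubmonoid.mem_inf, mem_adjoin]
      constructor
      · intro hx
        exact ⟨Or.inr hx, Or.inr hx⟩
      · rintro ⟨rfl | h1, h2 | h2⟩
        · omega
        · exact h2
        · exact h1
        · exact h1

end Stmt19Aux

/-- a numerical semigroup of multiplicity `4` is `4`-irreducible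
iff it is `⟨4,5,6,7⟩`, or `⟨4,6,7,9⟩`, or an irreducible numerical semigroup. -/
theorem stmt19 (S : AddSubmonoid ℕ)
    (hns : IsNumericalSemigroup S) (hmult : multiplicityNS S = 4) :
    IsMIrreducibleNS 4 S ↔
      (S = AddSubmonoid.closure {4, 5, 6, 7} ∨
       S = AddSubmonoid.closure {4, 6, 7, 9} ∨
       IsIrreducibleNS S) := by
  constructor
  · intro h4irr
    by_contra hcon
    push_neg at hcon
    obtain ⟨hS1, hS2, hirr⟩ := hcon
    rw [IsIrreducibleNS, not_not] at hirr
    obtain ⟨T₁, T₂, hn1, hn2, heq, hl1, hl2⟩ := hirr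
    have hfin : ((S : Set ℕ)ᶜ).Finite := hns
    have h3S : (3 : ℕ) ∉ S := fun h => by
      have := Stmt19Aux.four_le S hmult 3 h (by norm_num); omega
    have hGne : hfin.toFinset.Nonempty := ⟨3, by simp [Set.Finite.mem_toFinset]; exact h3S⟩
    obtain ⟨F, hFS, hFmax⟩ : ∃ F : ℕ, F ∉ S ∧ ∀ x, x ∉ S → x ≤ F := by
      refine ⟨hfin.toFinset.max' hGne, ?_, ?_⟩
      · have := hfin.toFinset.max'_mem hGne
        simpa [Set.Finite.mem_toFinset] using this
      · intro x hx
        exact hfin.toFinset.le_max' x (by simpa [Set.Finite.mem_toFinset] using hx)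
    have hFnot : F ∉ T₁ ∨ F ∉ T₂ := by
      by_contra hc
      push_neg at hc
      exact hFS (heq ▸ (AddSubmonoid.mem_inf.mpr hc : F ∈ T₁ ⊓ T₂))
    apply h4irr
    rcases hFnot with hF | hF
    · exact Stmt19Aux.key S hns hmult hS1 hS2 T₁ hl1 F hFS hFmax hF
    · exact Stmt19Aux.key S hns hmult hS1 hS2 T₂ hl2 F hFS hFmax hF
  · rintro (rfl | rfl | hirr)
    · rintro ⟨T₁, T₂, hn1, hn2, hm1, hm2, heq, hl1, hl2⟩
      obtain ⟨x, hxT, hxS⟩ := (SetLike.lt_iff_le_and_exists.mp hl1).2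
      rw [Stmt19Aux.mem_closure1] at hxS
      push_neg at hxS
      have := Stmt19Aux.four_le T₁ hm1 x hxT hxS.1
      omega
    · rintro ⟨T₁, T₂, hn1, hn2, hm1, hm2, heq, hl1, hl2⟩
      have h5T : ∀ (T : AddSubmonoid ℕ), multiplicityNS T = 4 →
          AddSubmonoid.closure {4, 6, 7, 9} < T → (5 : ℕ) ∈ T := by
        intro T hmT hlT
        obtain ⟨x, hxT, hxS⟩ := (SetLike.lt_iff_le_and_exists.mp hlT).2
        rw [Stmt19Aux.mem_closure2] at hxS
        push_neg at hxS
        have := Stmt19Aux.four_le T hmT x hxT hxS.1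
        have hx5 : x = 5 := by omega
        exact hx5 ▸ hxT
      have h5 : (5 : ℕ) ∈ AddSubmonoid.closure ({4, 6, 7, 9} : Set ℕ) := by
        rw [heq]
        exact AddSubmonoid.mem_inf.mpr ⟨h5T T₁ hm1 hl1, h5T T₂ hm2 hl2⟩
      rw [Stmt19Aux.mem_closure2] at h5
      omega
    · rintro ⟨T₁, T₂, hn1, hn2, _, _, heq, hl1, hl2⟩
      exact hirr ⟨T₁, T₂, hn1, hn2, heq, hl1, hl2⟩
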